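/- For all integers n ≥ 1, 2·F_{2n−1} − 5·F_{2n−2} = L_{4n−4} − 4·∑_{k=1}^{n−1} F_{2k}·L_{4n−4k−4}. -/
import Mathlib

def lucas : ℕ → ℕ
  | 0 => 2
  | 1 => 1
  | n + 2 => lucas (n + 1) + lucas n

lemma lucas_add_two (j : ℕ) : lucas (j + 2) = lucas (j + 1) + lucas j := rfl

lemma lucas8 (j : ℕ) : (lucas (j + 8) : ℤ) = 7 * lucas (j + 4) - lucas j := by
  have h : lucas (j + 8) + lucas j = 7 * lucas (j + 4) := by
    simp [show j+8 = (j+6)+2 from rfl, show j+7 = (j+5)+2 from rfl,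
      show j+6 = (j+4)+2 from rfl, show j+5 = (j+3)+2 from rfl,
      show j+4 = (j+2)+2 from rfl, show j+3 = (j+1)+2 from rfl, lucas_add_two]
    ring
  omega

lemma fibZ (j : ℕ) : (Nat.fib (j + 2) : ℤ) = Nat.fib (j + 1) + Nat.fib j := by
  push_cast [Nat.fib_add_two]; ring

lemma key (m : ℕ) : 2 * (Nat.fib (2 * m + 1) : ℤ) - 5 * (Nat.fib (2 * m) : ℤ) =
    (lucas (4 * m) : ℤ) -
      4 * ∑ k ∈ Finset.Icc 1 m, (Nat.fib (2 * k) : ℤ) * (lucas (4 * m - 4 * k) : ℤ) := by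
  induction m using Nat.twoStepInduction with
  | zero => simp [lucas]
  | one => norm_num [lucas, lucas_add_two, Nat.fib_add_two]
  | more m ih1 ih2 =>
    have h2 : ∑ k ∈ Finset.Icc 1 (m + 2), (Nat.fib (2 * k) : ℤ) * (lucas (4 * (m+2) - 4 * k) : ℤ)
        = (∑ k ∈ Finset.Icc 1 m, (Nat.fib (2 * k) : ℤ) * (lucas (4 * (m+2) - 4 * k) : ℤ))
          + (Nat.fib (2 * (m+1)) : ℤ) * lucas 4 + (Nat.fib (2 * (m+2)) : ℤ) * lucas 0 := by
      rw [Finset.sum_Icc_succ_top (by omega : 1 ≤ m + 2),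
        Finset.sum_Icc_succ_top (by omega : 1 ≤ m + 1),
        show 4 * (m+2) - 4 * (m+1) = 4 from by omega,
        show 4 * (m+2) - 4 * (m+2) = 0 from by omega]
    have h1 : ∑ k ∈ Finset.Icc 1 (m + 1), (Nat.fib (2 * k) : ℤ) * (lucas (4 * (m+1) - 4 * k) : ℤ)
        = (∑ k ∈ Finset.Icc 1 m, (Nat.fib (2 * k) : ℤ) * (lucas (4 * (m+1) - 4 * k) : ℤ))
          + (Nat.fib (2 * (m+1)) : ℤ) * lucas 0 := by
      rw [Finset.sum_Icc_succ_top (by omega : 1 ≤ m + 1),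
        show 4 * (m+1) - 4 * (m+1) = 0 from by omega]
    have hc : ∑ k ∈ Finset.Icc 1 m, (Nat.fib (2 * k) : ℤ) * (lucas (4 * (m+2) - 4 * k) : ℤ)
        = 7 * (∑ k ∈ Finset.Icc 1 m, (Nat.fib (2 * k) : ℤ) * (lucas (4 * (m+1) - 4 * k) : ℤ))
          - ∑ k ∈ Finset.Icc 1 m, (Nat.fib (2 * k) : ℤ) * (lucas (4 * m - 4 * k) : ℤ) := by
      rw [Finset.mul_sum, ← Finset.sum_sub_distrib]
      apply Finset.sum_congr rfl
      intro k hk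
      simp only [Finset.mem_Icc] at hk
      have e1 : 4 * (m+2) - 4 * k = (4 * m - 4 * k) + 8 := by omega
      have e2 : 4 * (m+1) - 4 * k = (4 * m - 4 * k) + 4 := by omega
      rw [e1, e2, lucas8]
      ring
    have hL : (lucas (4 * (m+2)) : ℤ) = 7 * lucas (4 * (m+1)) - lucas (4 * m) := by
      have e1 : 4 * (m+2) = 4 * m + 8 := by ring
      have e2 : 4 * (m+1) = 4 * m + 4 := by ring
      rw [e1, e2, lucas8]
    have g1 := fibZ (2*m+3)
    have g2 := fibZ (2*m+2)
    have g3 := fibZ (2*m+1)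
    have g4 := fibZ (2*m)
    have ih2' := ih2
    rw [h2, hc, hL]
    rw [h1] at ih2'
    simp only [show lucas 0 = 2 from rfl, show lucas 4 = 7 from rfl] at *
    push_cast at *
    ring_nf at *
    linarith [ih1, ih2', g1, g2, g3, g4]

theorem stmt14 (n : ℕ) (hn : 1 ≤ n) :
    2 * (Nat.fib (2 * n - 1) : ℤ) - 5 * (Nat.fib (2 * n - 2) : ℤ) =
      (lucas (4 * n - 4) : ℤ) -
        4 * ∑ k ∈ Finset.Icc 1 (n - 1), (Nat.fib (2 * k) : ℤ) * (lucas (4 * n - 4 * k - 4) : ℤ) := by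
  obtain ⟨m, rfl⟩ : ∃ m, n = m + 1 := ⟨n - 1, by omega⟩
  have e1 : 2 * (m+1) - 1 = 2 * m + 1 := by omega
  have e2 : 2 * (m+1) - 2 = 2 * m := by omega
  have e3 : 4 * (m+1) - 4 = 4 * m := by omega
  have e4 : m + 1 - 1 = m := rfl
  rw [e1, e2, e3, e4]
  have := key m
  rw [this]
  congr 1
  congr 1
  apply Finset.sum_congr rfl
  intro k hk
  simp only [Finset.mem_Icc] at hk
  rw [show 4 * (m + 1) - 4 * k - 4 = 4 * m - 4 * k from by omega]
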